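/- Let 0 < τ < T, let λ > 0, let Z be uniformly distributed on [0, T − τ], and let S be exponentially distributed with rate λ, with Z and S independent. Then the probability that τ + Z + S lands in some ON interval [nT, nT + τ), summed over all integers n ≥ 1, equals p := ( e^{λT} + 1 − e^{λτ} − e^{λ(T−τ)} ) / ( λ (e^{λT} − 1)(T − τ) ); that is, Σ_{n=1}^{∞} P( nT ≤ τ + Z + S < nT + τ ) = p. -/

import Mathlib

open MeasureTheory ProbabilityTheory

section Aux
open Real Set

private lemma expMeasure_eq_withDensity' (r : ℝ) :
    expMeasure r = volume.withDensity (exponentialPDF r) := rfl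

private lemma expMeasure_Iic' {r : ℝ} (hr : 0 < r) {x : ℝ} (hx : 0 ≤ x) :
    expMeasure r (Iic x) = ENNReal.ofReal (1 - exp (-(r * x))) := by
  rw [expMeasure_eq_withDensity', withDensity_apply _ measurableSet_Iic,
    lintegral_exponentialPDF_eq_antiDeriv hr, if_pos hx]

private lemma expMeasure_singleton' (r t : ℝ) : expMeasure r {t} = 0 := by
  rw [expMeasure_eq_withDensity', withDensity_apply _ (measurableSet_singleton t),
    Measure.restrict_eq_zero.mpr (by simp), lintegral_zero_measure]

private lemma expMeasure_Iio' {r : ℝ} (hr : 0 < r) {x : ℝ} (hx : 0 ≤ x) :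
    expMeasure r (Iio x) = ENNReal.ofReal (1 - exp (-(r * x))) := by
  rw [← Iic_diff_right, measure_diff_null (expMeasure_singleton' r x), expMeasure_Iic' hr hx]

private lemma expMeasure_Ico' {r : ℝ} (hr : 0 < r) {x y : ℝ} (hx : 0 ≤ x) (hxy : x ≤ y) :
    expMeasure r (Ico x y) = ENNReal.ofReal (exp (-(r * x)) - exp (-(r * y))) := by
  have : IsProbabilityMeasure (expMeasure r) := isProbabilityMeasure_expMeasure hr
  rw [← Iio_sdiff_Iio, measure_diff (Iio_subset_Iio hxy) measurableSet_Iio.nullMeasurableSet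
    (measure_ne_top _ _), expMeasure_Iio' hr hx, expMeasure_Iio' hr (hx.trans hxy),
    ← ENNReal.ofReal_sub _ (by nlinarith [exp_le_one_iff.mpr (by nlinarith : -(r*x) ≤ 0)])]
  ring_nf

private lemma prob_key' {Ω : Type*} [MeasurableSpace Ω] (μ : Measure Ω) [IsFiniteMeasure μ]
    {b lam : ℝ} (hb : 0 < b) (hlam : 0 < lam)
    (Z S : Ω → ℝ) (hZmeas : Measurable Z) (hSmeas : Measurable S)
    (hZunif : Measure.map Z μ = (ENNReal.ofReal b)⁻¹ • volume.restrict (Icc 0 b))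
    (hSexp : Measure.map S μ = expMeasure lam)
    (hindep : IndepFun Z S μ)
    {a τ : ℝ} (hab : b ≤ a) (hτ : 0 < τ) :
    μ {ω | a ≤ Z ω + S ω ∧ Z ω + S ω < a + τ} =
      ENNReal.ofReal ((exp (lam * b) - 1) / lam *
        (exp (-(lam * a)) - exp (-(lam * (a + τ)))) / b) := by
  have hmap : Measure.map (fun ω => (Z ω, S ω)) μ = (Measure.map Z μ).prod (Measure.map S μ) :=
    (ProbabilityTheory.indepFun_iff_map_prod_eq_prod_map_map hZmeas.aemeasurable
      hSmeas.aemeasurable).mp hindep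
  have hs : MeasurableSet {p : ℝ × ℝ | a ≤ p.1 + p.2 ∧ p.1 + p.2 < a + τ} :=
    (measurableSet_le measurable_const (measurable_fst.add measurable_snd)).inter
      (measurableSet_lt (measurable_fst.add measurable_snd) measurable_const)
  have hev : {ω | a ≤ Z ω + S ω ∧ Z ω + S ω < a + τ}
      = (fun ω => (Z ω, S ω)) ⁻¹' {p : ℝ × ℝ | a ≤ p.1 + p.2 ∧ p.1 + p.2 < a + τ} := rfl
  have : IsProbabilityMeasure (expMeasure lam) := isProbabilityMeasure_expMeasure hlam
  rw [hev, ← Measure.map_apply (hZmeas.prodMk hSmeas) hs, hmap, hZunif, hSexp,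
    Measure.prod_apply hs]
  have hpre : ∀ x : ℝ, (Prod.mk x ⁻¹' {p : ℝ × ℝ | a ≤ p.1 + p.2 ∧ p.1 + p.2 < a + τ})
      = Ico (a - x) (a + τ - x) := by
    intro x; ext y; simp [Set.mem_Ico]; constructor <;> intro h <;> constructor <;>
      linarith [h.1, h.2]
  simp only [hpre]
  rw [lintegral_smul_measure]
  have hcong : ∫⁻ x in Icc 0 b, expMeasure lam (Ico (a - x) (a + τ - x))
      = ∫⁻ x in Icc 0 b, ENNReal.ofReal
          (exp (-(lam * (a - x))) - exp (-(lam * (a + τ - x)))) := by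
    refine setLIntegral_congr_fun measurableSet_Icc ?_
    intro x hx
    exact expMeasure_Ico' hlam (by linarith [hx.2] : (0:ℝ) ≤ a - x) (by linarith)
  rw [hcong]
  have hnonneg : ∀ x : ℝ, 0 ≤ exp (-(lam * (a - x))) - exp (-(lam * (a + τ - x))) := by
    intro x
    have : -(lam * (a + τ - x)) ≤ -(lam * (a - x)) := by nlinarith
    linarith [exp_le_exp.mpr this]
  have hint : IntegrableOn (fun x => exp (-(lam * (a - x))) - exp (-(lam * (a + τ - x))))
      (Icc 0 b) volume := by
    apply Continuous.integrableOn_Icc; continuity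
  rw [← ofReal_integral_eq_lintegral_ofReal hint (ae_of_all _ hnonneg)]
  have hval : ∫ x in Icc 0 b, (exp (-(lam * (a - x))) - exp (-(lam * (a + τ - x))))
      = (exp (lam * b) - 1) / lam * (exp (-(lam * a)) - exp (-(lam * (a + τ)))) := by
    have hfun : ∀ x : ℝ, exp (-(lam * (a - x))) - exp (-(lam * (a + τ - x)))
        = (exp (-(lam * a)) - exp (-(lam * (a + τ)))) * exp (lam * x) := by
      intro x
      rw [show -(lam * (a - x)) = -(lam * a) + lam * x by ring,
        show -(lam * (a + τ - x)) = -(lam * (a + τ)) + lam * x by ring,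
        exp_add, exp_add]; ring
    simp only [hfun]
    rw [MeasureTheory.integral_const_mul, integral_Icc_eq_integral_Ioc,
      ← intervalIntegral.integral_of_le hb.le]
    have : ∫ x in (0:ℝ)..b, exp (lam * x) = (exp (lam * b) - 1) / lam := by
      rw [intervalIntegral.integral_comp_mul_left (fun x => exp x) (by positivity : lam ≠ 0)]
      · simp [integral_exp]; field_simp
    rw [this]; ring
  rw [hval]
  rw [ENNReal.ofReal_div_of_pos hb, ENNReal.div_eq_inv_mul, smul_eq_mul]

end Aux

/-- Closed form for `p` in the exponential case: if `Z ~ Unif(0, T - τ)` and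
`S ~ Exp(lam)` are independent, then the total probability that `τ + Z + S` lands in
some ON interval `[nT, nT + τ)` (summed over `n ≥ 1`) equals
`(e^{lam T} + 1 - e^{lam τ} - e^{lam (T-τ)}) / (lam (e^{lam T} - 1)(T - τ))`. -/
theorem stmt_6 {Ω : Type*} [MeasurableSpace Ω] (μ : Measure Ω) [IsProbabilityMeasure μ]
    (τ T lam : ℝ) (hτ : 0 < τ) (hτT : τ < T) (hlam : 0 < lam)
    (Z S : Ω → ℝ) (hZmeas : Measurable Z) (hSmeas : Measurable S)
    (hZunif : Measure.map Z μ
      = (ENNReal.ofReal (T - τ))⁻¹ • volume.restrict (Set.Icc 0 (T - τ)))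
    (hSexp : Measure.map S μ = expMeasure lam)
    (hindep : IndepFun Z S μ) :
    ∑' n : ℕ, (μ {ω | ((n : ℝ) + 1) * T ≤ τ + Z ω + S ω ∧
        τ + Z ω + S ω < ((n : ℝ) + 1) * T + τ}).toReal
      = (Real.exp (lam * T) + 1 - Real.exp (lam * τ) - Real.exp (lam * (T - τ))) /
          (lam * (Real.exp (lam * T) - 1) * (T - τ)) := by
  open Real in
  have hb : (0:ℝ) < T - τ := by linarith
  have hT : (0:ℝ) < T := by linarith
  have prob_key : ∀ {a : ℝ}, T - τ ≤ a →
      μ {ω | a ≤ Z ω + S ω ∧ Z ω + S ω < a + τ} =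
        ENNReal.ofReal ((exp (lam * (T - τ)) - 1) / lam *
          (exp (-(lam * a)) - exp (-(lam * (a + τ)))) / (T - τ)) :=
    fun hab => prob_key' μ hb hlam Z S hZmeas hSmeas hZunif hSexp hindep hab hτ
  set q : ℝ := exp (-(lam * T)) with hq
  set C : ℝ := (exp (lam * (T - τ)) - 1) / lam *
      (exp (-(lam * (T - τ))) - exp (-(lam * T))) / (T - τ) with hC
  have hqlt : q < 1 := exp_lt_one_iff.mpr (by nlinarith)
  have hqpos : (0:ℝ) < q := exp_pos _
  have hterm : ∀ n : ℕ, (μ {ω | ((n : ℝ) + 1) * T ≤ τ + Z ω + S ω ∧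
        τ + Z ω + S ω < ((n : ℝ) + 1) * T + τ}).toReal = C * q ^ n := by
    intro n
    set a : ℝ := ((n : ℝ) + 1) * T - τ with ha
    have hba : T - τ ≤ a := by
      have : (0:ℝ) ≤ (n : ℝ) := Nat.cast_nonneg n
      nlinarith
    have hev : {ω | ((n : ℝ) + 1) * T ≤ τ + Z ω + S ω ∧
        τ + Z ω + S ω < ((n : ℝ) + 1) * T + τ}
        = {ω | a ≤ Z ω + S ω ∧ Z ω + S ω < a + τ} := by
      ext ω; simp only [Set.mem_setOf_eq, ha]; constructor <;> intro h <;>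
        exact ⟨by linarith [h.1], by linarith [h.2]⟩
    rw [hev, prob_key hba, ENNReal.toReal_ofReal]
    · have h1 : exp (-(lam * a)) = exp (-(lam * (T - τ))) * q ^ n := by
        rw [hq, ← exp_nat_mul, ← exp_add]
        congr 1; ring
      have h2 : exp (-(lam * (a + τ))) = exp (-(lam * T)) * q ^ n := by
        rw [hq, ← exp_nat_mul, ← exp_add]
        congr 1; ring
      rw [h1, h2, hC]; ring
    · have hK : 0 ≤ (exp (lam * (T - τ)) - 1) / lam := by
        have : (1:ℝ) ≤ exp (lam * (T - τ)) := one_le_exp (by positivity)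
        exact div_nonneg (by linarith) hlam.le
      have hd : 0 ≤ exp (-(lam * a)) - exp (-(lam * (a + τ))) := by
        have : -(lam * (a + τ)) ≤ -(lam * a) := by nlinarith
        linarith [exp_le_exp.mpr this]
      positivity
  simp only [hterm]
  rw [tsum_mul_left, tsum_geometric_of_lt_one hqpos.le hqlt]
  have hu : (0:ℝ) < exp (lam * τ) := exp_pos _
  have hv : (0:ℝ) < exp (lam * (T - τ)) := exp_pos _
  set u : ℝ := exp (lam * τ)
  set v : ℝ := exp (lam * (T - τ))
  have hT' : exp (lam * T) = u * v := by
    rw [show lam * T = lam * τ + lam * (T - τ) by ring, exp_add]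
  have hnv : exp (-(lam * (T - τ))) = v⁻¹ := by rw [exp_neg]
  have hnT : exp (-(lam * T)) = (u * v)⁻¹ := by rw [exp_neg, hT']
  have huv : (1:ℝ) < u * v := by
    rw [← hT', ← exp_zero]; exact exp_lt_exp.mpr (by positivity)
  rw [hC, hq, hT', hnv, hnT]
  have h1 : u * v - 1 ≠ 0 := by nlinarith
  have h2 : 1 - (u * v)⁻¹ ≠ 0 := by
    have : (u * v)⁻¹ < 1 := by rw [inv_lt_one_iff₀]; right; exact huv
    nlinarith
  field_simp
  ring
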